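/- Let τ, γ, n, φ, α, δ be real numbers with γ ≠ 0, n ≠ 0 and ξ = (n-1)/n, and suppose Y := (τ+γ) + τ(ξ/n)αδφ ≠ 0. Let F be the 2×2 real matrix [[0, τ],[0, τ(n-1)(1-φ) + τξφα]] and V the 2×2 diagonal matrix [[γ,0],[0,Y]]. Then V is invertible and the characteristic polynomial of F·V⁻¹ is X·(X - R₀), where R₀ = (τn(n-1) - τ(n-1)(n-α)φ)/(n(τ+γ) + τξαδφ); in particular the eigenvalues of the next generation matrix F·V⁻¹ are 0 and R₀. -/

import Mathlib

open Polynomial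

/-- The next-generation-matrix computation for the pairwise model with the
simple closure: with F = [[0, τ],[0, τ(n-1)(1-φ) + τξφα]] and
V = diag(γ, (τ+γ) + τ(ξ/n)αδφ), V is invertible and the characteristic
polynomial of F·V⁻¹ is X(X - R₀) with
R₀ = (τn(n-1) - τ(n-1)(n-α)φ)/(n(τ+γ) + τξαδφ); in particular the eigenvalues
of the next generation matrix F·V⁻¹ are 0 and R₀. -/
theorem next_generation_matrix_charpoly
    (τ γ n φ α δ : ℝ) (hγ : γ ≠ 0) (hn : n ≠ 0)
    (ξ : ℝ) (hξ : ξ = (n - 1) / n)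
    (hY : (τ + γ) + τ * (ξ / n) * α * δ * φ ≠ 0) :
    let F : Matrix (Fin 2) (Fin 2) ℝ :=
      !![0, τ; 0, τ * (n - 1) * (1 - φ) + τ * ξ * φ * α]
    let V : Matrix (Fin 2) (Fin 2) ℝ :=
      !![γ, 0; 0, (τ + γ) + τ * (ξ / n) * α * δ * φ]
    let R₀ : ℝ := (τ * n * (n - 1) - τ * (n - 1) * (n - α) * φ)
        / (n * (τ + γ) + τ * ξ * α * δ * φ)
    IsUnit V ∧
    (F * V⁻¹).charpoly = X * (X - C R₀) ∧
    (F * V⁻¹).charpoly.IsRoot 0 ∧ (F * V⁻¹).charpoly.IsRoot R₀ := by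
  intro F V R₀
  set Y : ℝ := (τ + γ) + τ * (ξ / n) * α * δ * φ with hYdef
  have hVdet : V.det = γ * Y := by
    simp [V, Matrix.det_fin_two_of, hYdef.symm]
  have hUnit : IsUnit V := by
    rw [Matrix.isUnit_iff_isUnit_det, hVdet]
    exact (isUnit_iff_ne_zero.2 (mul_ne_zero hγ hY))
  have hVinv : V⁻¹ = !![γ⁻¹, 0; 0, Y⁻¹] := by
    apply Matrix.inv_eq_right_inv
    ext i j
    fin_cases i <;> fin_cases j <;>
      simp [V, Matrix.mul_apply, Fin.sum_univ_two, hγ, hY, mul_inv_cancel₀, hYdef.symm]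
  set M : ℝ := τ * (n - 1) * (1 - φ) + τ * ξ * φ * α with hMdef
  have hFV : F * V⁻¹ = !![0, τ * Y⁻¹; 0, M * Y⁻¹] := by
    rw [hVinv]
    ext i j
    fin_cases i <;> fin_cases j <;>
      simp [F, Matrix.mul_apply, Fin.sum_univ_two, hMdef.symm]
  have hR : M * Y⁻¹ = R₀ := by
    have hden : n * (τ + γ) + τ * ξ * α * δ * φ ≠ 0 := by
      intro h
      apply hY
      have : n * Y = n * (τ + γ) + τ * ξ * α * δ * φ := by
        rw [hYdef]; field_simp
      have : n * Y = 0 := this.trans h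
      rcases mul_eq_zero.1 this with h' | h'
      · exact absurd h' hn
      · exact h'
    subst hξ
    rw [← div_eq_mul_inv, div_eq_div_iff hY hden]
    rw [hMdef, hYdef]
    field_simp
    ring
  have hcp : (F * V⁻¹).charpoly = X * (X - C R₀) := by
    rw [hFV, Matrix.charpoly, Matrix.det_fin_two]
    simp [Matrix.charmatrix_apply_eq, Matrix.charmatrix_apply_ne, hR]
  refine ⟨hUnit, hcp, ?_, ?_⟩ <;> simp [hcp, IsRoot]
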